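/- For every ρ ∈ (−1, 1), the relative efficiency 4 · [1/9 − ((2/π)·arcsin(ρ/2))²] · (π²/4) · 1/(1−ρ²) is at least π²/9 and at most 2√3·π/9; in particular it is bounded above by 1.21 and bounded below by 1. -/

import Mathlib

open Real

/-- Chord inequality: sin lies above its chord from 0 to a on [0,a] ⊆ [0,π]. -/
lemma chord_sin {a x : ℝ} (ha : 0 < a) (haπ : a ≤ π) (hx : 0 ≤ x) (hxa : x ≤ a) :
    x * Real.sin a ≤ a * Real.sin x := by
  have hconc := strictConcaveOn_sin_Icc.concaveOn
  have h0 : (0:ℝ) ∈ Set.Icc (0:ℝ) π := ⟨le_rfl, Real.pi_pos.le⟩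
  have hA : a ∈ Set.Icc (0:ℝ) π := ⟨ha.le, haπ⟩
  have hl1 : (0:ℝ) ≤ 1 - x / a := by
    have : x / a ≤ 1 := div_le_one_of_le₀ hxa ha.le
    linarith
  have hl2 : (0:ℝ) ≤ x / a := div_nonneg hx ha.le
  have h := hconc.2 h0 hA hl1 hl2 (by ring)
  simp only [smul_eq_mul, mul_zero, Real.sin_zero, mul_zero, zero_add] at h
  have hxa' : x / a * a = x := div_mul_cancel₀ x ha.ne'
  rw [hxa'] at h
  have := mul_le_mul_of_nonneg_left h ha.le
  calc x * Real.sin a = a * (x / a * Real.sin a) := by field_simp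
    _ ≤ a * Real.sin x := this

lemma g_hasDeriv (t : ℝ) :
    HasDerivAt (fun t : ℝ => 2 * Real.sqrt 3 * π / 9 * (1 - 4 * Real.sin t ^ 2) + 4 * t ^ 2)
      (2 * Real.sqrt 3 * π / 9 * (-(4 * (2 * Real.sin t * Real.cos t))) + 8 * t) t := by
  have h1 : HasDerivAt (fun t : ℝ => Real.sin t ^ 2) (2 * Real.sin t ^ 1 * Real.cos t) t :=
    (Real.hasDerivAt_sin t).pow 2
  have h2 : HasDerivAt (fun t : ℝ => 1 - 4 * Real.sin t ^ 2)
      (-(4 * (2 * Real.sin t ^ 1 * Real.cos t))) t :=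
    (hasDerivAt_const t (1:ℝ)).sub ((h1.const_mul 4)) |>.congr_deriv (by ring)
  have h3 := h2.const_mul (2 * Real.sqrt 3 * π / 9)
  have h4 : HasDerivAt (fun t : ℝ => 4 * t ^ 2) (8 * t) t := by
    have := (hasDerivAt_pow 2 t).const_mul (4:ℝ)
    refine this.congr_deriv ?_
    push_cast; ring
  have := h3.add h4
  refine this.congr_deriv ?_
  ring

lemma key_upper {t : ℝ} (ht0 : 0 ≤ t) (ht : t ≤ π / 6) :
    π ^ 2 / 9 - 4 * t ^ 2 ≤ 2 * Real.sqrt 3 * π / 9 * (1 - 4 * Real.sin t ^ 2) := by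
  set C := 2 * Real.sqrt 3 * π / 9 with hC
  set g : ℝ → ℝ := fun t => C * (1 - 4 * Real.sin t ^ 2) + 4 * t ^ 2 with hg
  have hanti : AntitoneOn g (Set.Icc 0 (π / 6)) := by
    apply antitoneOn_of_deriv_nonpos (convex_Icc _ _)
    · exact Continuous.continuousOn (by fun_prop)
    · intro x hx
      exact (g_hasDeriv x).differentiableAt.differentiableWithinAt
    · intro x hx
      rw [interior_Icc] at hx
      rw [(g_hasDeriv x).deriv]
      have hx0 : 0 < x := hx.1
      have hx6 : x < π / 6 := hx.2
      have hch := chord_sin (a := π / 3) (x := 2 * x) (by positivity)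
        (by linarith [Real.pi_pos]) (by linarith) (by linarith)
      rw [Real.sin_pi_div_three, Real.sin_two_mul] at hch
      have hs3 : Real.sqrt 3 * Real.sqrt 3 = 3 := Real.mul_self_sqrt (by norm_num)
      have hs3' : (0:ℝ) ≤ Real.sqrt 3 := Real.sqrt_nonneg 3
      have hπ : (0:ℝ) < π := Real.pi_pos
      nlinarith [mul_le_mul_of_nonneg_left hch hs3']
  have hend : g (π / 6) = π ^ 2 / 9 := by
    rw [hg]
    simp only [Real.sin_pi_div_six]
    ring
  have hmem : (π / 6) ∈ Set.Icc (0:ℝ) (π / 6) := ⟨by positivity, le_rfl⟩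
  have hfin := hanti ⟨ht0, ht⟩ hmem ht
  rw [hend] at hfin
  have : g t = C * (1 - 4 * Real.sin t ^ 2) + 4 * t ^ 2 := rfl
  linarith [hfin.trans_eq this]

lemma main_ineq (ρ : ℝ) (h0 : 0 ≤ ρ) (h1 : ρ < 1) :
    π ^ 2 / 9 * (1 - ρ ^ 2) ≤ π ^ 2 / 9 - 4 * arcsin (ρ / 2) ^ 2 ∧
      π ^ 2 / 9 - 4 * arcsin (ρ / 2) ^ 2 ≤ 2 * Real.sqrt 3 * π / 9 * (1 - ρ ^ 2) := by
  have hπ : (0:ℝ) < π := Real.pi_pos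
  set t := arcsin (ρ / 2) with htdef
  have hsin : Real.sin t = ρ / 2 := Real.sin_arcsin (by linarith) (by linarith)
  have ht0 : 0 ≤ t := Real.arcsin_nonneg.mpr (by linarith)
  have hpi6 : arcsin (1 / 2 : ℝ) = π / 6 := by
    rw [← Real.sin_pi_div_six]
    exact Real.arcsin_sin (by linarith) (by linarith)
  have ht6 : t ≤ π / 6 := by
    rw [htdef, ← hpi6]
    exact Real.monotone_arcsin (by linarith)
  constructor
  · -- lower bound: from chord at a = π/6
    have hch := chord_sin (a := π / 6) (x := t) (by positivity)
      (by linarith) ht0 ht6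
    rw [Real.sin_pi_div_six, hsin] at hch
    -- hch : t * (1/2) ≤ (π/6) * (ρ/2), so t ≤ π ρ / 6
    nlinarith [sq_nonneg (π * ρ - 6 * t)]
  · have := key_upper ht0 ht6
    rw [hsin] at this
    nlinarith [this]

theorem stmt_4 (ρ : ℝ) (hρ : ρ ∈ Set.Ioo (-1 : ℝ) 1) :
    π ^ 2 / 9 ≤ 4 * (1 / 9 - ((2 / π) * arcsin (ρ / 2)) ^ 2) * (π ^ 2 / 4) *
        (1 / (1 - ρ ^ 2)) ∧
      4 * (1 / 9 - ((2 / π) * arcsin (ρ / 2)) ^ 2) * (π ^ 2 / 4) * (1 / (1 - ρ ^ 2))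
        ≤ 2 * Real.sqrt 3 * π / 9 ∧
      1 ≤ 4 * (1 / 9 - ((2 / π) * arcsin (ρ / 2)) ^ 2) * (π ^ 2 / 4) *
        (1 / (1 - ρ ^ 2)) ∧
      4 * (1 / 9 - ((2 / π) * arcsin (ρ / 2)) ^ 2) * (π ^ 2 / 4) * (1 / (1 - ρ ^ 2))
        ≤ 1.21 := by
  obtain ⟨hm1, h1⟩ := hρ
  have hπ : (0:ℝ) < π := Real.pi_pos
  have hpos : 0 < 1 - ρ ^ 2 := by nlinarith
  have key : π ^ 2 / 9 * (1 - ρ ^ 2) ≤ π ^ 2 / 9 - 4 * arcsin (ρ / 2) ^ 2 ∧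
      π ^ 2 / 9 - 4 * arcsin (ρ / 2) ^ 2 ≤ 2 * Real.sqrt 3 * π / 9 * (1 - ρ ^ 2) := by
    rcases le_or_gt 0 ρ with h | h
    · exact main_ineq ρ h h1
    · have := main_ineq (-ρ) (by linarith) (by linarith)
      rw [show -ρ / 2 = -(ρ / 2) by ring, Real.arcsin_neg] at this
      simpa [neg_sq] using this
  have hE : 4 * (1 / 9 - ((2 / π) * arcsin (ρ / 2)) ^ 2) * (π ^ 2 / 4) * (1 / (1 - ρ ^ 2))
      = (π ^ 2 / 9 - 4 * arcsin (ρ / 2) ^ 2) / (1 - ρ ^ 2) := by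
    field_simp
    ring
  rw [hE]
  have hlow : π ^ 2 / 9 ≤ (π ^ 2 / 9 - 4 * arcsin (ρ / 2) ^ 2) / (1 - ρ ^ 2) :=
    (le_div_iff₀ hpos).mpr key.1
  have hup : (π ^ 2 / 9 - 4 * arcsin (ρ / 2) ^ 2) / (1 - ρ ^ 2) ≤ 2 * Real.sqrt 3 * π / 9 :=
    (div_le_iff₀ hpos).mpr key.2
  have hpi3 : (3:ℝ) < π := Real.pi_gt_three
  have hpi4 : π < 3.1416 := Real.pi_lt_d4
  have hs3 : Real.sqrt 3 ≤ 1.7321 := by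
    rw [show (1.7321:ℝ) = Real.sqrt (1.7321 ^ 2) from (Real.sqrt_sq (by norm_num)).symm]
    exact Real.sqrt_le_sqrt (by norm_num)
  have hs3' : (0:ℝ) ≤ Real.sqrt 3 := Real.sqrt_nonneg 3
  refine ⟨hlow, hup, ?_, ?_⟩
  · nlinarith
  · nlinarith
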